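/- For d×d max-plus matrices M and H and all k ≥ 2, the k-th semidirect power satisfies (M,H)^k = ( (M ⊗ ⊕_{i=0}^{k-1} H^{⊗i}) ⊕ (H ⊗ ⊕_{i=0}^{k-2} H^{⊗i}), H^{∘k} ), where H^{⊗0} = I is the tropical identity matrix. -/

import Mathlib

open Finset

abbrev Rmax : Type := WithBot ℝ

/-- Tropical (max-plus) matrix product. -/
noncomputable def trMul {l m n : ℕ} (A : Matrix (Fin l) (Fin m) Rmax) (B : Matrix (Fin m) (Fin n) Rmax) :
    Matrix (Fin l) (Fin n) Rmax :=
  fun i j => univ.sup fun k => A i k + B k j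

/-- Entrywise tropical sum (max) of matrices. -/
noncomputable def trSup {m n : ℕ} (A B : Matrix (Fin m) (Fin n) Rmax) : Matrix (Fin m) (Fin n) Rmax :=
  fun i j => A i j ⊔ B i j

/-- Tropical identity matrix. -/
noncomputable def trId (d : ℕ) : Matrix (Fin d) (Fin d) Rmax := fun i j => if i = j then 0 else ⊥

/-- Tropical matrix powers, `trPow A 0 = I`. -/
noncomputable def trPow {d : ℕ} (A : Matrix (Fin d) (Fin d) Rmax) : ℕ → Matrix (Fin d) (Fin d) Rmax
  | 0 => trId d
  | n + 1 => trMul (trPow A n) A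

/-- Adjoint product `A ∘ B = A ⊕ B ⊕ (A ⊗ B)`. -/
noncomputable def adj {d : ℕ} (A B : Matrix (Fin d) (Fin d) Rmax) : Matrix (Fin d) (Fin d) Rmax :=
  trSup (trSup A B) (trMul A B)

/-- Adjoint powers: `adjPow A n = A^{∘n}` for `n ≥ 1` (value at 0 is junk `A`). -/
noncomputable def adjPow {d : ℕ} (A : Matrix (Fin d) (Fin d) Rmax) : ℕ → Matrix (Fin d) (Fin d) Rmax
  | 0 => A
  | 1 => A
  | n + 2 => adj (adjPow A (n + 1)) A

/-- Semidirect product of pairs: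
`(M,G)·(A,H) = (M ⊕ A ⊕ H ⊕ (M ⊗ H), G ∘ H)`. -/
noncomputable def sd {d : ℕ} (p q : Matrix (Fin d) (Fin d) Rmax × Matrix (Fin d) (Fin d) Rmax) :
    Matrix (Fin d) (Fin d) Rmax × Matrix (Fin d) (Fin d) Rmax :=
  (trSup (trSup (trSup p.1 q.1) q.2) (trMul p.1 q.2), adj p.2 q.2)

/-- Semidirect powers: `sdPow p n = p^n` for `n ≥ 1` (value at 0 is junk `p`). -/
noncomputable def sdPow {d : ℕ} (p : Matrix (Fin d) (Fin d) Rmax × Matrix (Fin d) (Fin d) Rmax) :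
    ℕ → Matrix (Fin d) (Fin d) Rmax × Matrix (Fin d) (Fin d) Rmax
  | 0 => p
  | 1 => p
  | n + 2 => sd (sdPow p (n + 1)) p

/-- Maximum cycle mean `λ(F)`: maximum over cycles `(c 0, c 1, …, c k, c 0)` of
the average arc weight. -/
noncomputable def mcm {d : ℕ} (F : Matrix (Fin d) (Fin d) Rmax) : Rmax :=
  univ.sup fun kc : Σ k : Fin d, Fin (k.1 + 1) → Fin d =>
    (∑ i, F (kc.2 i) (kc.2 (i + 1))).map fun w => w / ((kc.1 : ℕ) + 1)

/-- Metric matrix `A⁺ = A ⊕ A^{⊗2} ⊕ ⋯ ⊕ A^{⊗d}`. -/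
noncomputable def metric {d : ℕ} (A : Matrix (Fin d) (Fin d) Rmax) : Matrix (Fin d) (Fin d) Rmax :=
  fun i j => (Finset.Icc 1 d).sup fun k => trPow A k i j

/-- Kleene star `A* = I ⊕ A ⊕ ⋯ ⊕ A^{⊗(d-1)}`. -/
noncomputable def kstar {d : ℕ} (A : Matrix (Fin d) (Fin d) Rmax) : Matrix (Fin d) (Fin d) Rmax :=
  fun i j => (Finset.range d).sup fun k => trPow A k i j

/-- `F` is irreducible: its weighted digraph is strongly connected. -/
def TrIrreducible {d : ℕ} (F : Matrix (Fin d) (Fin d) Rmax) : Prop :=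
  ∀ i j : Fin d, Relation.ReflTransGen (fun a b => F a b ≠ ⊥) i j


section Aux

lemma add_sup' (a b c : Rmax) : a + (b ⊔ c) = (a + b) ⊔ (a + c) := by
  rcases le_total b c with h | h
  · rw [sup_eq_right.2 h, sup_eq_right.2 (add_le_add_right h a)]
  · rw [sup_eq_left.2 h, sup_eq_left.2 (add_le_add_right h a)]

lemma sup_add' (a b c : Rmax) : (b ⊔ c) + a = (b + a) ⊔ (c + a) := by
  rcases le_total b c with h | h
  · rw [sup_eq_right.2 h, sup_eq_right.2 (add_le_add_left h a)]
  · rw [sup_eq_left.2 h, sup_eq_left.2 (add_le_add_left h a)]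

lemma add_finsup {ι : Type*} (s : Finset ι) (f : ι → Rmax) (a : Rmax) :
    a + s.sup f = s.sup fun x => a + f x := by
  induction s using Finset.cons_induction with
  | empty => simp
  | cons x s hx ih => rw [Finset.sup_cons, Finset.sup_cons, add_sup', ih]

lemma finsup_add {ι : Type*} (s : Finset ι) (f : ι → Rmax) (a : Rmax) :
    s.sup f + a = s.sup fun x => f x + a := by
  induction s using Finset.cons_induction with
  | empty => simp
  | cons x s hx ih => rw [Finset.sup_cons, Finset.sup_cons, sup_add', ih]

lemma finsup_sup {ι : Type*} (s : Finset ι) (f g : ι → Rmax) :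
    s.sup (fun x => f x ⊔ g x) = s.sup f ⊔ s.sup g := by
  induction s using Finset.cons_induction with
  | empty => simp
  | cons x s hx ih => rw [Finset.sup_cons, Finset.sup_cons, Finset.sup_cons, ih, sup_sup_sup_comm]

lemma finsup_range_succ' (f : ℕ → Rmax) (n : ℕ) :
    (Finset.range (n + 1)).sup f = f 0 ⊔ (Finset.range n).sup fun i => f (i + 1) := by
  induction n with
  | zero => simp
  | succ n ih =>
      rw [Finset.range_add_one, Finset.sup_insert, ih, Finset.range_add_one, Finset.sup_insert,
        sup_left_comm]

lemma trMul_sup_right {d : ℕ} (A B C : Matrix (Fin d) (Fin d) Rmax) :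
    trMul A (trSup B C) = trSup (trMul A B) (trMul A C) := by
  funext i j
  simp only [trMul, trSup, add_sup']
  exact finsup_sup _ _ _

lemma trMul_sup_left {d : ℕ} (A B C : Matrix (Fin d) (Fin d) Rmax) :
    trMul (trSup A B) C = trSup (trMul A C) (trMul B C) := by
  funext i j
  simp only [trMul, trSup, sup_add']
  exact finsup_sup _ _ _

lemma trMul_id_right {d : ℕ} (A : Matrix (Fin d) (Fin d) Rmax) : trMul A (trId d) = A := by
  funext i j
  refine le_antisymm (Finset.sup_le fun k _ => ?_) ?_
  · by_cases h : k = j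
    · subst h; simp [trId]
    · simp [trId, h]
  · have := Finset.le_sup (f := fun k => A i k + trId d k j) (Finset.mem_univ j)
    exact le_trans (le_of_eq (by simp [trId])) this

lemma trMul_id_left {d : ℕ} (A : Matrix (Fin d) (Fin d) Rmax) : trMul (trId d) A = A := by
  funext i j
  refine le_antisymm (Finset.sup_le fun k _ => ?_) ?_
  · by_cases h : i = k
    · subst h; simp [trId]
    · simp [trId, h]
  · have := Finset.le_sup (f := fun k => trId d i k + A k j) (Finset.mem_univ i)
    exact le_trans (le_of_eq (by simp [trId])) this

lemma trMul_assoc {d : ℕ} (A B C : Matrix (Fin d) (Fin d) Rmax) :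
    trMul (trMul A B) C = trMul A (trMul B C) := by
  funext i j
  simp only [trMul, finsup_add, add_finsup]
  rw [Finset.sup_comm]
  simp only [add_assoc]

lemma trMul_finsup_right {ι : Type*} {d : ℕ} (A : Matrix (Fin d) (Fin d) Rmax) (s : Finset ι)
    (f : ι → Matrix (Fin d) (Fin d) Rmax) :
    trMul A (fun i j => s.sup fun t => f t i j) = fun i j => s.sup fun t => trMul A (f t) i j := by
  funext i j
  simp only [trMul, add_finsup]
  exact Finset.sup_comm _ _ _

lemma trMul_finsup_left {ι : Type*} {d : ℕ} (A : Matrix (Fin d) (Fin d) Rmax) (s : Finset ι)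
    (f : ι → Matrix (Fin d) (Fin d) Rmax) :
    trMul (fun i j => s.sup fun t => f t i j) A = fun i j => s.sup fun t => trMul (f t) A i j := by
  funext i j
  simp only [trMul, finsup_add]
  exact Finset.sup_comm _ _ _

/-- `trSum H k = I ⊕ H ⊕ ⋯ ⊕ H^{⊗(k-1)}`. -/
noncomputable def trSum {d : ℕ} (H : Matrix (Fin d) (Fin d) Rmax) (k : ℕ) :
    Matrix (Fin d) (Fin d) Rmax :=
  fun i j => (Finset.range k).sup fun t => trPow H t i j

lemma trSum_succ {d : ℕ} (H : Matrix (Fin d) (Fin d) Rmax) (k : ℕ) :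
    trSum H (k + 1) = trSup (trSum H k) (trPow H k) := by
  funext i j
  simp only [trSum, trSup]
  rw [Finset.range_add_one, Finset.sup_insert, sup_comm]

lemma trSum_one {d : ℕ} (H : Matrix (Fin d) (Fin d) Rmax) : trSum H 1 = trId d := by
  funext i j
  simp only [trSum, Finset.range_one, Finset.sup_singleton]
  rfl

lemma key {d : ℕ} (A H : Matrix (Fin d) (Fin d) Rmax) (k : ℕ) :
    trSup A (trMul (trMul A (trSum H k)) H) = trMul A (trSum H (k + 1)) := by
  rw [trMul_assoc]
  have h1 : trMul (trSum H k) H = fun i j => (Finset.range k).sup fun t => trPow H (t + 1) i j :=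
    trMul_finsup_left H (Finset.range k) (fun t => trPow H t)
  have h2 : trMul A (trSum H (k + 1))
      = fun i j => (Finset.range (k + 1)).sup fun t => trMul A (trPow H t) i j :=
    trMul_finsup_right A (Finset.range (k + 1)) (fun t => trPow H t)
  have h3 : trMul A (fun i j => (Finset.range k).sup fun t => trPow H (t + 1) i j)
      = fun i j => (Finset.range k).sup fun t => trMul A (trPow H (t + 1)) i j :=
    trMul_finsup_right A (Finset.range k) (fun t => trPow H (t + 1))
  rw [h1, h3, h2]
  funext i j
  simp only [trSup]
  rw [finsup_range_succ' (fun t => trMul A (trPow H t) i j) k]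
  congr 1
  exact (congrFun (congrFun (trMul_id_right A).symm i) j)

lemma sdPow_succ {d : ℕ} (p : Matrix (Fin d) (Fin d) Rmax × Matrix (Fin d) (Fin d) Rmax)
    (k : ℕ) (hk : 1 ≤ k) : sdPow p (k + 1) = sd (sdPow p k) p := by
  cases k with
  | zero => omega
  | succ n => rfl

end Aux

theorem sdPow_eq {d : ℕ} (M H : Matrix (Fin d) (Fin d) Rmax) (k : ℕ) (hk : 2 ≤ k) :
    sdPow (M, H) k =
      (trSup (trMul M (fun i j => (Finset.range k).sup fun t => trPow H t i j))
        (trMul H (fun i j => (Finset.range (k - 1)).sup fun t => trPow H t i j)),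
       adjPow H k) := by
  obtain ⟨m, rfl⟩ : ∃ m, k = m + 2 := ⟨k - 2, by omega⟩
  clear hk
  induction m with
  | zero =>
      show sdPow (M, H) 2 = (trSup (trMul M (trSum H 2)) (trMul H (trSum H 1)), adjPow H 2)
      have h2 : sdPow (M, H) 2 = sd (M, H) (M, H) := rfl
      rw [h2]
      simp only [sd, Prod.mk.injEq]
      constructor
      · rw [trSum_succ, trSum_one, trMul_sup_right, trMul_id_right, trMul_id_right,
          show trPow H 1 = trMul (trId d) H from rfl, trMul_id_left]
        funext i j
        simp only [trSup]
        rw [sup_idem, sup_right_comm]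
      · rfl
  | succ m ih =>
      show sdPow (M, H) (m + 3) = (trSup (trMul M (trSum H (m + 3))) (trMul H (trSum H (m + 2))),
        adjPow H (m + 3))
      have ih' : sdPow (M, H) (m + 2)
          = (trSup (trMul M (trSum H (m + 2))) (trMul H (trSum H (m + 1))), adjPow H (m + 2)) := ih
      have hs : sdPow (M, H) (m + 3) = sd (sdPow (M, H) (m + 2)) (M, H) := rfl
      rw [hs, ih']
      simp only [sd, Prod.mk.injEq]
      refine ⟨?_, rfl⟩
      rw [trMul_sup_left]
      have e1 := key M H (m + 2)
      have e2 := key H H (m + 1)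
      have e3 : trMul M (trSum H (m + 3))
          = trSup (trMul M (trSum H (m + 2))) (trMul M (trPow H (m + 2))) := by
        rw [trSum_succ, trMul_sup_right]
      have e4 : trMul H (trSum H (m + 2))
          = trSup (trMul H (trSum H (m + 1))) (trMul H (trPow H (m + 1))) := by
        rw [trSum_succ, trMul_sup_right]
      funext i j
      have e1' := congrFun (congrFun e1 i) j
      have e2' := congrFun (congrFun e2 i) j
      have e3' := congrFun (congrFun e3 i) j
      have e4' := congrFun (congrFun e4 i) j
      simp only [trSup] at e1' e2' e3' e4' ⊢
      refine le_antisymm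
        (sup_le (sup_le (sup_le (sup_le ?_ ?_) ?_) ?_) (sup_le ?_ ?_)) (sup_le ?_ ?_)
      · exact le_sup_of_le_left (by rw [e3']; exact le_sup_left)
      · exact le_sup_of_le_right (by rw [e4']; exact le_sup_left)
      · exact le_sup_of_le_left (by rw [← e1']; exact le_sup_left)
      · exact le_sup_of_le_right (by rw [← e2']; exact le_sup_left)
      · exact le_sup_of_le_left (by rw [← e1']; exact le_sup_right)
      · exact le_sup_of_le_right (by rw [← e2']; exact le_sup_right)
      · rw [← e1']
        exact sup_le (le_sup_of_le_left (le_sup_of_le_left le_sup_right))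
          (le_sup_of_le_right le_sup_left)
      · rw [← e2']
        exact sup_le (le_sup_of_le_left le_sup_right) (le_sup_of_le_right le_sup_right)
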